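/- Every Motzkin path without peaks or valleys that is symmetric (equal to its reverse with U and D interchanged) and nonempty can be written uniquely as A H A' or A H H A', where A is a peakless-valleyless Motzkin path prefix ending at some height h ≥ 0 and A' is the mirror image (reverse with U↔D swapped) of A. -/

import Mathlib

/-- Steps of bargraphs / Motzkin paths. -/
inductive Step where
  | U : Step
  | H : Step
  | D : Step
deriving DecidableEq

/-- Vertical displacement of a step. -/
def Step.val : Step → ℤ
  | .U => 1
  | .H => 0
  | .D => -1

/-- Mirror of a step (swap U and D). -/
def Step.mirror : Step → Step
  | .U => .D
  | .H => .H
  | .D => .U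

/-- Final height of a word. -/
def hgt (w : List Step) : ℤ := (w.map Step.val).sum

/-- A Motzkin path prefix: never goes below the x-axis. -/
def IsMotzkinPrefix (w : List Step) : Prop := ∀ p : List Step, p <+: w → 0 ≤ hgt p

/-- A Motzkin path: never below the x-axis, ends at height 0. -/
def IsMotzkin (w : List Step) : Prop := IsMotzkinPrefix w ∧ hgt w = 0

/-- No peak `UD` and no valley `DU`. -/
def Cornerless (w : List Step) : Prop :=
  ¬ [Step.U, Step.D] <:+: w ∧ ¬ [Step.D, Step.U] <:+: w

/-- A bargraph: starts at the origin, ends on the x-axis, stays strictly above the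
x-axis except at the endpoints, and has no factor `UD` or `DU`. -/
def IsBargraph (w : List Step) : Prop :=
  2 ≤ w.length ∧ hgt w = 0 ∧
    (∀ p : List Step, p <+: w → p ≠ [] → p ≠ w → 0 < hgt p) ∧ Cornerless w

/-- Semiperimeter: number of `U` steps plus number of `H` steps. -/
def semi (w : List Step) : ℕ := w.count Step.U + w.count Step.H

/-- Length of the initial run of `U` steps. -/
def leadU : List Step → ℕ
  | Step.U :: rest => leadU rest + 1
  | _ => 0

/-- Length of the initial run of `H` steps. -/
def leadH : List Step → ℕ
  | Step.H :: rest => leadH rest + 1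
  | _ => 0

/-- Length of the initial run of `D` steps. -/
def leadD : List Step → ℕ
  | Step.D :: rest => leadD rest + 1
  | _ => 0

/-- Length of the first maximal run of `D` steps (0 if none). -/
def firstDescLen : List Step → ℕ
  | [] => 0
  | Step.D :: rest => leadD rest + 1
  | _ :: rest => firstDescLen rest

/-- Number of occurrences of the two-letter factor `a b`. -/
def cnt2 (a b : Step) : List Step → ℕ
  | x :: y :: rest => (if x = a ∧ y = b then 1 else 0) + cnt2 a b (y :: rest)
  | _ => 0

/-- Heights of the columns (`H` steps), starting from a given height. -/
def colHeights : ℤ → List Step → List ℤ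
  | _, [] => []
  | h, Step.U :: rest => colHeights (h + 1) rest
  | h, Step.H :: rest => h :: colHeights h rest
  | h, Step.D :: rest => colHeights (h - 1) rest

/-- Width of the leftmost maximal horizontal segment (0 if none). -/
def lhsW : List Step → ℕ
  | [] => 0
  | Step.H :: rest => leadH rest + 1
  | _ :: rest => lhsW rest

/-- Delete `h` steps at the start of the leftmost horizontal segment. -/
def stripLeadH (h : ℕ) : List Step → List Step
  | [] => []
  | Step.H :: rest => List.drop h (Step.H :: rest)
  | s :: rest => s :: stripLeadH h rest

/-- Number of initial columns of height 1: largest `j` such that the word begins `U H^j`. -/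
def iuc : List Step → ℕ
  | Step.U :: rest => leadH rest
  | _ => 0

/-- Number of maximal horizontal segments. -/
def hsCount : List Step → ℕ
  | [] => 0
  | [Step.H] => 1
  | [_] => 0
  | a :: b :: rest => (if a = Step.H ∧ b ≠ Step.H then 1 else 0) + hsCount (b :: rest)

/-- Mirror image: reverse the word and swap `U` with `D`. -/
def mir (w : List Step) : List Step := (w.reverse).map Step.mirror

/-- Shape of strictly alternating bargraphs:
`U^{i₁} H D^{k₁} H U^{i₂} H D^{k₂} H ⋯ U^{iₘ} H D^{kₘ}` with all `iᵣ, kᵣ ≥ 1`. -/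
inductive SAShape : List Step → Prop where
  | base (i k : ℕ) : 1 ≤ i → 1 ≤ k →
      SAShape (List.replicate i Step.U ++ [Step.H] ++ List.replicate k Step.D)
  | cons (i k : ℕ) (w : List Step) : 1 ≤ i → 1 ≤ k → SAShape w →
      SAShape (List.replicate i Step.U ++ [Step.H] ++ List.replicate k Step.D ++ [Step.H] ++ w)

/-- A strictly alternating bargraph. -/
def IsStrictAlt (w : List Step) : Prop := IsBargraph w ∧ SAShape w

/-- A secondary structure on `{0, …, m-1}`: all consecutive edges are present, every
vertex has at most one non-consecutive neighbour, and there are no crossing edges. -/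
def IsSecondaryStructure {m : ℕ} (G : SimpleGraph (Fin m)) : Prop :=
  (∀ i j : Fin m, (i : ℕ) + 1 = (j : ℕ) → G.Adj i j) ∧
  (∀ i j k : Fin m, G.Adj i j → G.Adj i k →
      (i : ℕ) + 1 ≠ (j : ℕ) → (j : ℕ) + 1 ≠ (i : ℕ) →
      (i : ℕ) + 1 ≠ (k : ℕ) → (k : ℕ) + 1 ≠ (i : ℕ) → j = k) ∧
  ¬ ∃ i j k l : Fin m, (i : ℕ) < (j : ℕ) ∧ (j : ℕ) < (k : ℕ) ∧ (k : ℕ) < (l : ℕ) ∧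
      G.Adj i k ∧ G.Adj j l

/-- Generating function of bargraphs: `x` (variable 0) marks `H` steps,
`y` (variable 1) marks `U` steps. -/
noncomputable def BG : MvPowerSeries (Fin 2) ℚ :=
  fun d => (Nat.card {w : List Step //
    IsBargraph w ∧ w.count Step.H = d 0 ∧ w.count Step.U = d 1} : ℚ)

/-- Generating function of cornerless Motzkin paths. -/
noncomputable def MG : MvPowerSeries (Fin 2) ℚ :=
  fun d => (Nat.card {w : List Step //
    IsMotzkin w ∧ Cornerless w ∧ w.count Step.H = d 0 ∧ w.count Step.U = d 1} : ℚ)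

/-- Generating function of bargraphs avoiding the factor `DH`. -/
noncomputable def BDH : MvPowerSeries (Fin 2) ℚ :=
  fun d => (Nat.card {w : List Step //
    IsBargraph w ∧ ¬ [Step.D, Step.H] <:+: w ∧
      w.count Step.H = d 0 ∧ w.count Step.U = d 1} : ℚ)

/-- Generating function of bargraphs avoiding the factors `DH` and `HH`. -/
noncomputable def BDHHH : MvPowerSeries (Fin 2) ℚ :=
  fun d => (Nat.card {w : List Step //
    IsBargraph w ∧ ¬ [Step.D, Step.H] <:+: w ∧ ¬ [Step.H, Step.H] <:+: w ∧
      w.count Step.H = d 0 ∧ w.count Step.U = d 1} : ℚ)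

/-- Generating function of cornerless Motzkin path prefixes ending at height `h`. -/
noncomputable def Pgf (h : ℕ) : MvPowerSeries (Fin 2) ℚ :=
  fun d => (Nat.card {w : List Step //
    IsMotzkinPrefix w ∧ Cornerless w ∧ hgt w = (h : ℤ) ∧
      w.count Step.H = d 0 ∧ w.count Step.U = d 1} : ℚ)

/-- Decomposition `G = U^a G₁ H G₂ D^a` of a strictly alternating bargraph. -/
def SADecomp (t : ℕ × List Step × List Step) (G : List Step) : Prop :=
  1 ≤ t.1 ∧ IsStrictAlt t.2.1 ∧ IsStrictAlt (Step.U :: (t.2.2 ++ [Step.D])) ∧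
    G = List.replicate t.1 Step.U ++ t.2.1 ++ [Step.H] ++ t.2.2 ++
      List.replicate t.1 Step.D

lemma Step.mirror_mirror (s : Step) : s.mirror.mirror = s := by cases s <;> rfl

lemma mir_append (a b : List Step) : mir (a ++ b) = mir b ++ mir a := by
  simp [mir]

lemma mir_mir (a : List Step) : mir (mir a) = a := by
  simp [mir, List.map_map, Function.comp_def, Step.mirror_mirror]

lemma mir_length (a : List Step) : (mir a).length = a.length := by simp [mir]

lemma drop_eq_mir_take (w : List Step) (hm : mir w = w) (k j : ℕ) (hj : w.length = k + j) :
    w.drop j = mir (w.take k) := by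
  conv_lhs => rw [← hm]
  unfold mir
  rw [← List.map_drop, List.drop_reverse]
  have : w.length - j = k := by omega
  rw [this]

lemma take_good (w : List Step) (hw : IsMotzkinPrefix w) (hc : Cornerless w) (k : ℕ) :
    IsMotzkinPrefix (w.take k) ∧ Cornerless (w.take k) := by
  have hp : w.take k <+: w := List.take_prefix k w
  refine ⟨fun p hpp => hw p (hpp.trans hp), ?_, ?_⟩
  · intro h; exact hc.1 (h.trans hp.isInfix)
  · intro h; exact hc.2 (h.trans hp.isInfix)

lemma mir_pair (a b : Step) : mir [a, b] = [b.mirror, a.mirror] := rfl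

lemma mir_single (s : Step) : mir [s] = [s.mirror] := rfl

lemma split3 (w : List Step) (k c : ℕ) :
    w = w.take k ++ ((w.drop k).take c ++ w.drop (k + c)) := by
  conv_lhs => rw [← List.take_append_drop k w]
  congr 1
  conv_lhs => rw [← List.take_append_drop c (w.drop k)]
  rw [List.drop_drop]


/-- every nonempty symmetric cornerless Motzkin path can be written
uniquely as `A H A'` or `A H H A'`, where `A` is a cornerless Motzkin path prefix and
`A'` is its mirror image. -/
theorem symmetric_decomposition :
    ∀ w : List Step, IsMotzkin w → Cornerless w → mir w = w → w ≠ [] →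
      ∃! A : List Step, IsMotzkinPrefix A ∧ Cornerless A ∧
        (w = A ++ [Step.H] ++ mir A ∨ w = A ++ [Step.H, Step.H] ++ mir A) := by
  intro w hw hc hm hne
  have hlen0 : w.length ≠ 0 := fun h => hne (List.length_eq_zero_iff.mp h)
  rcases Nat.even_or_odd w.length with he | ho
  · -- even case : length = 2k+2
    obtain ⟨k, hk⟩ : ∃ k, w.length = 2 * k + 2 := by
      rcases he with ⟨m, hmm⟩
      exact ⟨m - 1, by omega⟩
    set A := w.take k with hA
    have hsp := split3 w k 2
    have hdrop : w.drop (k + 2) = mir A := drop_eq_mir_take w hm k (k + 2) (by omega)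
    have hmidlen : ((w.drop k).take 2).length = 2 := by
      simp [List.length_take, List.length_drop]; omega
    obtain ⟨a, b, hab⟩ := List.length_eq_two.mp hmidlen
    rw [hab, hdrop] at hsp
    -- hsp : w = A ++ ([a, b] ++ mir A)
    have hmw : A ++ ([a, b] ++ mir A) = A ++ ([b.mirror, a.mirror] ++ mir A) := by
      conv_lhs => rw [← hsp, ← hm, hsp]
      rw [mir_append, mir_append, mir_mir, mir_pair, List.append_assoc]
    have hcanc := List.append_cancel_right (List.append_cancel_left hmw)
    have hba : a = b.mirror ∧ b = a.mirror := by simpa using hcanc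
    have hinf : ([a, b] : List Step) <:+: w :=
      ⟨A, mir A, by rw [List.append_assoc]; exact hsp.symm⟩
    have hbH : a = Step.H ∧ b = Step.H := by
      cases b with
      | U =>
        have : a = Step.D := by simpa [Step.mirror] using hba.1
        subst this; exact absurd hinf hc.2
      | D =>
        have : a = Step.U := by simpa [Step.mirror] using hba.1
        subst this; exact absurd hinf hc.1
      | H => exact ⟨by simpa [Step.mirror] using hba.1, rfl⟩
    obtain ⟨ha, hb⟩ := hbH
    subst ha; subst hb
    obtain ⟨hAp, hAc⟩ := take_good w hw.1 hc k
    have hsp' : w = A ++ [Step.H, Step.H] ++ mir A := by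
      rw [List.append_assoc]; exact hsp
    refine ⟨A, ⟨hAp, hAc, Or.inr hsp'⟩, ?_⟩
    rintro B ⟨_, _, hB | hB⟩
    · exfalso
      have := congrArg List.length hB
      simp [mir_length] at this
      omega
    · have hBlen : B.length = k := by
        have := congrArg List.length hB
        simp [mir_length] at this
        omega
      have : w.take k = B := by
        conv_lhs => rw [hB, ← hBlen, List.append_assoc]
        exact List.take_left
      exact this.symm
  · -- odd case : length = 2k+1
    obtain ⟨k, hk⟩ := ho
    have hk' : w.length = 2 * k + 1 := by omega
    set A := w.take k with hA
    have hsp := split3 w k 1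
    have hdrop : w.drop (k + 1) = mir A := drop_eq_mir_take w hm k (k + 1) (by omega)
    have hmidlen : ((w.drop k).take 1).length = 1 := by
      simp [List.length_take, List.length_drop]; omega
    obtain ⟨s, hs⟩ := List.length_eq_one_iff.mp hmidlen
    rw [hs, hdrop] at hsp
    have hmw : A ++ ([s] ++ mir A) = A ++ ([s.mirror] ++ mir A) := by
      conv_lhs => rw [← hsp, ← hm, hsp]
      rw [mir_append, mir_append, mir_mir, mir_single, List.append_assoc]
    have hcanc := List.append_cancel_right (List.append_cancel_left hmw)
    have hss : s = s.mirror := by simpa using hcanc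
    have hsH : s = Step.H := by cases s <;> simp [Step.mirror] at hss ⊢
    subst hsH
    obtain ⟨hAp, hAc⟩ := take_good w hw.1 hc k
    have hsp' : w = A ++ [Step.H] ++ mir A := by
      rw [List.append_assoc]; exact hsp
    refine ⟨A, ⟨hAp, hAc, Or.inl hsp'⟩, ?_⟩
    rintro B ⟨_, _, hB | hB⟩
    · have hBlen : B.length = k := by
        have := congrArg List.length hB
        simp [mir_length] at this
        omega
      have : w.take k = B := by
        conv_lhs => rw [hB, ← hBlen, List.append_assoc]
        exact List.take_left
      exact this.symm
    · exfalso
      have := congrArg List.length hB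
      simp [mir_length] at this
      omega
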